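/- In a c-splitting authentication code with source state set S, message set M, and encoding rule set E, the probability P_{d_i} that an opponent succeeds in a spoofing attack of order i satisfies P_{d_i} ≥ c·(|S|−i)/(|M|−i) for every i ≥ 0. -/

import Mathlib

open scoped BigOperators

section SpoofAux

variable {S M E : Type} [Fintype S] [Fintype M] [Fintype E]
    [DecidableEq S] [DecidableEq M] {i : ℕ}

/-- The weight of an elementary outcome. -/
def spoofWgt (pE : E → ℝ) (pS : (Fin i ↪ S) → ℝ) (sp : E → S → M → ℝ)
    (g : E) (σ : Fin i ↪ S) (τ : Fin i → M) : ℝ :=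
  pE g * pS σ * ∏ j, sp g (σ j) (τ j)

/-- The contribution of outcome `(g, σ, τ)` to the success probability of
inserting message `m` after observing the set `T`. -/
noncomputable def spoofTerm (e : E → S → Finset M) (pE : E → ℝ)
    (pS : (Fin i ↪ S) → ℝ) (sp : E → S → M → ℝ)
    (T : Finset M) (m : M) (g : E) (σ : Fin i ↪ S) (τ : Fin i → M) : ℝ :=
  if (∀ j, τ j ∈ e g (σ j)) ∧ Finset.image τ Finset.univ = T ∧
      m ∉ T ∧ (∃ s, m ∈ e g s)
  then spoofWgt pE pS sp g σ τ else 0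

/-- Success probability of inserting `m` after observing `T`. -/
noncomputable def spoofH (e : E → S → Finset M) (pE : E → ℝ)
    (pS : (Fin i ↪ S) → ℝ) (sp : E → S → M → ℝ) (T : Finset M) (m : M) : ℝ :=
  ∑ g, ∑ σ, ∑ τ : Fin i → M, spoofTerm e pE pS sp T m g σ τ

private lemma spoof_sum_collapse {α : Type} [Fintype α] [DecidableEq α] (A : Finset α)
    (P : Prop) [Decidable P] (Q : Finset α → Prop) [DecidablePred Q] (x : ℝ) :
    (∑ T : Finset α, if P ∧ A = T ∧ Q T then x else 0) = if P ∧ Q A then x else 0 := by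
  classical
  rw [Finset.sum_eq_single_of_mem A (Finset.mem_univ A)]
  · simp
  · intro T _ hT
    rw [if_neg]
    rintro ⟨-, hAT, -⟩
    exact hT hAT.symm

private lemma sum_swap5 {α β γ δ ε : Type*} [Fintype α] [Fintype β] [Fintype γ]
    [Fintype δ] [Fintype ε] (f : α → β → γ → δ → ε → ℝ) :
    ∑ a, ∑ b, ∑ c, ∑ d, ∑ x, f a b c d x
      = ∑ c, ∑ d, ∑ x, ∑ a, ∑ b, f a b c d x := by
  calc ∑ a, ∑ b, ∑ c, ∑ d, ∑ x, f a b c d x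
      = ∑ a, ∑ c, ∑ b, ∑ d, ∑ x, f a b c d x :=
        Finset.sum_congr rfl fun a _ => Finset.sum_comm
    _ = ∑ a, ∑ c, ∑ d, ∑ b, ∑ x, f a b c d x :=
        Finset.sum_congr rfl fun a _ => Finset.sum_congr rfl fun c _ => Finset.sum_comm
    _ = ∑ a, ∑ c, ∑ d, ∑ x, ∑ b, f a b c d x :=
        Finset.sum_congr rfl fun a _ => Finset.sum_congr rfl fun c _ =>
          Finset.sum_congr rfl fun d _ => Finset.sum_comm
    _ = ∑ c, ∑ a, ∑ d, ∑ x, ∑ b, f a b c d x := Finset.sum_comm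
    _ = ∑ c, ∑ d, ∑ a, ∑ x, ∑ b, f a b c d x :=
        Finset.sum_congr rfl fun c _ => Finset.sum_comm
    _ = ∑ c, ∑ d, ∑ x, ∑ a, ∑ b, f a b c d x :=
        Finset.sum_congr rfl fun c _ => Finset.sum_congr rfl fun d _ => Finset.sum_comm

end SpoofAux

/-- **Huber's lower bound on the spoofing probability.**
In a `c`-splitting authentication code `(S, M, E)` — each encoding rule `g : E`
assigns to each source state `s` a `c`-subset `e g s` of messages, pairwise
disjoint over source states — the probability `P_{d_i}` of deception by a
spoofing attack of order `i` satisfies `P_{d_i} ≥ c (|S| - i) / (|M| - i)`.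

Here the transmitter/receiver use an encoding strategy `pE` (a distribution on
encoding rules), the `i` observed messages encode `i` distinct source states
drawn per a distribution `pS` on injections `Fin i ↪ S`, and for each rule and
source state the message is drawn per the splitting strategy `sp` supported on
`e g s`.  `P_{d_i}` is the supremum, over all opponent strategies `opp` (a
choice of inserted message given the set of observed messages), of the
probability that the inserted message is new and accepted as authentic (i.e.
lies in `⋃ s, e g s` but is none of the observed messages). -/
theorem spoofing_probability_lower_bound
    (S M E : Type) [Fintype S] [Fintype M] [Fintype E]
    [DecidableEq S] [DecidableEq M]
    (c i : ℕ) (hc : 0 < c) (hi : i < Fintype.card S)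
    (e : E → S → Finset M)
    (hcard : ∀ g s, (e g s).card = c)
    (hdisj : ∀ g, ∀ s s' : S, s ≠ s' → Disjoint (e g s) (e g s'))
    (pE : E → ℝ) (hpE : ∀ g, 0 ≤ pE g) (hpEsum : ∑ g, pE g = 1)
    (pS : (Fin i ↪ S) → ℝ) (hpS : ∀ σ, 0 ≤ pS σ) (hpSsum : ∑ σ, pS σ = 1)
    (sp : E → S → M → ℝ) (hsp : ∀ g s m, 0 ≤ sp g s m)
    (hsupp : ∀ g s m, sp g s m ≠ 0 → m ∈ e g s)
    (hspsum : ∀ g s, ∑ m, sp g s m = 1) :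
    (c : ℝ) * ((Fintype.card S : ℝ) - i) / ((Fintype.card M : ℝ) - i) ≤
      ⨆ opp : Finset M → M,
        ∑ g : E, ∑ σ : Fin i ↪ S, ∑ τ : Fin i → M,
          if (∀ j, τ j ∈ e g (σ j)) ∧
              opp (Finset.image τ Finset.univ) ∉ Finset.image τ Finset.univ ∧
              (∃ s, opp (Finset.image τ Finset.univ) ∈ e g s)
          then pE g * pS σ * ∏ j, sp g (σ j) (τ j)
          else 0 := by
  classical
  have hw0 : ∀ (g : E) (σ : Fin i ↪ S) (τ : Fin i → M), 0 ≤ spoofWgt pE pS sp g σ τ :=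
    fun g σ τ => mul_nonneg (mul_nonneg (hpE g) (hpS σ))
      (Finset.prod_nonneg fun j _ => hsp _ _ _)
  have hEne : Nonempty E := by
    by_contra hE
    rw [not_nonempty_iff] at hE
    rw [Finset.univ_eq_empty, Finset.sum_empty] at hpEsum
    norm_num at hpEsum
  obtain ⟨g₀⟩ := hEne
  -- cardinality of the set of valid messages for a rule
  have hU : ∀ g : E, (Finset.univ.biUnion (e g)).card = c * Fintype.card S := by
    intro g
    rw [Finset.card_biUnion (fun s _ s' _ hss' => hdisj g s s' hss')]
    simp [hcard, Finset.sum_const, mul_comm]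
  have hcM : c * Fintype.card S ≤ Fintype.card M := by
    rw [← hU g₀]; exact Finset.card_le_univ _
  have hScS : Fintype.card S ≤ c * Fintype.card S := Nat.le_mul_of_pos_left _ hc
  have hiM : i < Fintype.card M := lt_of_lt_of_le hi (le_trans hScS hcM)
  have hicS : i ≤ c * Fintype.card S := le_trans hi.le hScS
  have hMpos : (0:ℝ) < (Fintype.card M : ℝ) - i := by
    have : (i:ℝ) < Fintype.card M := by exact_mod_cast hiM
    linarith
  have hMne : Nonempty M := Fintype.card_pos_iff.mp (lt_of_le_of_lt (Nat.zero_le i) hiM)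
  obtain ⟨m₀⟩ := hMne
  -- injectivity of observed messages
  have hinj : ∀ (g : E) (σ : Fin i ↪ S) (τ : Fin i → M),
      (∀ j, τ j ∈ e g (σ j)) → Function.Injective τ := by
    intro g σ τ hv j k hjk
    by_contra hne
    have hσ : σ j ≠ σ k := fun hs => hne (σ.injective hs)
    exact (Finset.disjoint_left.mp (hdisj g _ _ hσ) (hv j)) (hjk ▸ hv k)
  have himg : ∀ (g : E) (σ : Fin i ↪ S) (τ : Fin i → M),
      (∀ j, τ j ∈ e g (σ j)) → (Finset.image τ Finset.univ).card = i := by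
    intro g σ τ hv
    rw [Finset.card_image_of_injective _ (hinj g σ τ hv), Finset.card_univ,
      Fintype.card_fin]
  -- total weight is 1
  have hWsum : ∑ g, ∑ σ, ∑ τ : Fin i → M,
      (if (∀ j, τ j ∈ e g (σ j)) then spoofWgt pE pS sp g σ τ else 0) = 1 := by
    have key : ∀ g σ, (∑ τ : Fin i → M,
        if (∀ j, τ j ∈ e g (σ j)) then spoofWgt pE pS sp g σ τ else 0)
        = pE g * pS σ := by
      intro g σ
      have h1 : ∀ τ : Fin i → M,
          (if (∀ j, τ j ∈ e g (σ j)) then spoofWgt pE pS sp g σ τ else 0)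
            = spoofWgt pE pS sp g σ τ := by
        intro τ
        split_ifs with hv
        · rfl
        · push_neg at hv
          obtain ⟨j, hj⟩ := hv
          have hz : sp g (σ j) (τ j) = 0 := by
            by_contra hz; exact hj (hsupp _ _ _ hz)
          simp only [spoofWgt]
          rw [Finset.prod_eq_zero (Finset.mem_univ j) hz, mul_zero]
      rw [Finset.sum_congr rfl fun τ _ => h1 τ]
      show ∑ τ : Fin i → M, pE g * pS σ * ∏ j, sp g (σ j) (τ j) = pE g * pS σ
      rw [← Finset.mul_sum]
      have h2 : (∑ τ : Fin i → M, ∏ j, sp g (σ j) (τ j)) = 1 := by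
        rw [← Fintype.prod_sum (fun j (m : M) => sp g (σ j) m)]
        simp [hspsum]
      rw [h2, mul_one]
    rw [Finset.sum_congr rfl fun g _ => Finset.sum_congr rfl fun σ _ => key g σ,
      ← Finset.sum_mul_sum, hpEsum, hpSsum, mul_one]
  -- nonnegativity of spoofH
  have hh0 : ∀ (T : Finset M) (m : M), 0 ≤ spoofH e pE pS sp T m := by
    intro T m
    refine Finset.sum_nonneg fun g _ => Finset.sum_nonneg fun σ _ =>
      Finset.sum_nonneg fun τ _ => ?_
    unfold spoofTerm
    split_ifs
    · exact hw0 g σ τ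
    · exact le_refl 0
  -- the optimal opponent
  have hmax : ∀ T : Finset M, ∃ m : M, ∀ m', spoofH e pE pS sp T m' ≤ spoofH e pE pS sp T m := by
    intro T
    obtain ⟨m, -, hm⟩ := Finset.exists_max_image (Finset.univ : Finset M)
      (spoofH e pE pS sp T) ⟨m₀, Finset.mem_univ m₀⟩
    exact ⟨m, fun m' => hm m' (Finset.mem_univ m')⟩
  choose opp hopp using hmax
  -- decomposition of the success probability
  have hFeq : ∀ o : Finset M → M,
      (∑ g : E, ∑ σ : Fin i ↪ S, ∑ τ : Fin i → M,
        if (∀ j, τ j ∈ e g (σ j)) ∧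
            o (Finset.image τ Finset.univ) ∉ Finset.image τ Finset.univ ∧
            (∃ s, o (Finset.image τ Finset.univ) ∈ e g s)
        then pE g * pS σ * ∏ j, sp g (σ j) (τ j) else 0)
      = ∑ T : Finset M, spoofH e pE pS sp T (o T) := by
    intro o
    have step : ∀ (g : E) (σ : Fin i ↪ S) (τ : Fin i → M),
        (if (∀ j, τ j ∈ e g (σ j)) ∧
            o (Finset.image τ Finset.univ) ∉ Finset.image τ Finset.univ ∧
            (∃ s, o (Finset.image τ Finset.univ) ∈ e g s)
          then pE g * pS σ * ∏ j, sp g (σ j) (τ j) else 0)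
        = ∑ T : Finset M, spoofTerm e pE pS sp T (o T) g σ τ := by
      intro g σ τ
      unfold spoofTerm
      rw [spoof_sum_collapse (Finset.image τ Finset.univ) (∀ j, τ j ∈ e g (σ j))
        (fun T => o T ∉ T ∧ ∃ s, o T ∈ e g s) (spoofWgt pE pS sp g σ τ)]
      rfl
    calc (∑ g : E, ∑ σ : Fin i ↪ S, ∑ τ : Fin i → M,
        if (∀ j, τ j ∈ e g (σ j)) ∧
            o (Finset.image τ Finset.univ) ∉ Finset.image τ Finset.univ ∧
            (∃ s, o (Finset.image τ Finset.univ) ∈ e g s)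
        then pE g * pS σ * ∏ j, sp g (σ j) (τ j) else 0)
        = ∑ g, ∑ σ, ∑ τ : Fin i → M, ∑ T : Finset M, spoofTerm e pE pS sp T (o T) g σ τ :=
          Finset.sum_congr rfl fun g _ => Finset.sum_congr rfl fun σ _ =>
            Finset.sum_congr rfl fun τ _ => step g σ τ
      _ = ∑ g, ∑ σ, ∑ T : Finset M, ∑ τ : Fin i → M, spoofTerm e pE pS sp T (o T) g σ τ :=
          Finset.sum_congr rfl fun g _ => Finset.sum_congr rfl fun σ _ => Finset.sum_comm
      _ = ∑ g, ∑ T : Finset M, ∑ σ, ∑ τ : Fin i → M, spoofTerm e pE pS sp T (o T) g σ τ :=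
          Finset.sum_congr rfl fun g _ => Finset.sum_comm
      _ = ∑ T : Finset M, ∑ g, ∑ σ, ∑ τ : Fin i → M, spoofTerm e pE pS sp T (o T) g σ τ :=
          Finset.sum_comm
      _ = ∑ T : Finset M, spoofH e pE pS sp T (o T) := rfl
  -- value of the sum over (T, m) for fixed (g, σ, τ)
  have hsumTm : ∀ (g : E) (σ : Fin i ↪ S) (τ : Fin i → M),
      (∑ T : Finset M, ∑ m : M, spoofTerm e pE pS sp T m g σ τ)
      = if (∀ j, τ j ∈ e g (σ j))
        then ((Finset.univ.biUnion (e g) \ Finset.image τ Finset.univ).card : ℝ)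
          * spoofWgt pE pS sp g σ τ
        else 0 := by
    intro g σ τ
    rw [Finset.sum_comm]
    have hmterm : ∀ m : M, (∑ T : Finset M, spoofTerm e pE pS sp T m g σ τ)
        = if (∀ j, τ j ∈ e g (σ j)) ∧
            m ∈ Finset.univ.biUnion (e g) \ Finset.image τ Finset.univ
          then spoofWgt pE pS sp g σ τ else 0 := by
      intro m
      unfold spoofTerm
      rw [spoof_sum_collapse (Finset.image τ Finset.univ) (∀ j, τ j ∈ e g (σ j))
        (fun T => m ∉ T ∧ ∃ s, m ∈ e g s) (spoofWgt pE pS sp g σ τ)]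
      refine if_congr (and_congr_right fun _ => ?_) rfl rfl
      rw [Finset.mem_sdiff, Finset.mem_biUnion]
      simp only [Finset.mem_univ, true_and, exists_prop]
      tauto
    rw [Finset.sum_congr rfl fun m _ => hmterm m]
    split_ifs with hv
    · rw [Finset.sum_congr rfl fun m _ => if_congr (and_iff_right hv) rfl rfl]
      rw [Finset.sum_ite_mem, Finset.univ_inter, Finset.sum_const, nsmul_eq_mul]
    · simp [hv]
  -- spoofH vanishes on observed messages
  have hHzeroT : ∀ (T : Finset M) (m : M), m ∈ T → spoofH e pE pS sp T m = 0 := by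
    intro T m hm
    refine Finset.sum_eq_zero fun g _ => Finset.sum_eq_zero fun σ _ =>
      Finset.sum_eq_zero fun τ _ => ?_
    unfold spoofTerm
    rw [if_neg]
    rintro ⟨-, -, hmT, -⟩
    exact hmT hm
  -- spoofH vanishes unless |T| = i
  have hHzeroCard : ∀ (T : Finset M), T.card ≠ i → ∀ m, spoofH e pE pS sp T m = 0 := by
    intro T hT m
    refine Finset.sum_eq_zero fun g _ => Finset.sum_eq_zero fun σ _ =>
      Finset.sum_eq_zero fun τ _ => ?_
    unfold spoofTerm
    rw [if_neg]
    rintro ⟨hv, hTimg, -⟩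
    exact hT (hTimg ▸ himg g σ τ hv)
  -- per-T bound by the maximum
  have hperT : ∀ T : Finset M,
      (∑ m, spoofH e pE pS sp T m)
        ≤ ((Fintype.card M : ℝ) - i) * spoofH e pE pS sp T (opp T) := by
    intro T
    by_cases hTc : T.card = i
    · have hsub : (∑ m, spoofH e pE pS sp T m) = ∑ m ∈ Tᶜ, spoofH e pE pS sp T m := by
        refine (Finset.sum_subset (Finset.subset_univ Tᶜ) fun m _ hm => ?_).symm
        refine hHzeroT T m ?_
        simpa using hm
      rw [hsub]
      have hle : (∑ m ∈ Tᶜ, spoofH e pE pS sp T m)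
          ≤ Tᶜ.card • spoofH e pE pS sp T (opp T) :=
        Finset.sum_le_card_nsmul Tᶜ _ _ fun m _ => hopp T m
      have hcc : (Tᶜ.card : ℝ) = (Fintype.card M : ℝ) - i := by
        rw [Finset.card_compl, hTc, Nat.cast_sub hiM.le]
      calc (∑ m ∈ Tᶜ, spoofH e pE pS sp T m)
          ≤ (Tᶜ.card : ℝ) * spoofH e pE pS sp T (opp T) := by
            rw [← nsmul_eq_mul]; exact hle
        _ = ((Fintype.card M : ℝ) - i) * spoofH e pE pS sp T (opp T) := by rw [hcc]
    · rw [Finset.sum_eq_zero fun m _ => hHzeroCard T hTc m]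
      exact mul_nonneg hMpos.le (hh0 T (opp T))
  -- lower bound on the double sum
  have hstep3 : ∀ (g : E) (σ : Fin i ↪ S) (τ : Fin i → M),
      ((c * Fintype.card S : ℝ) - i)
          * (if (∀ j, τ j ∈ e g (σ j)) then spoofWgt pE pS sp g σ τ else 0)
        ≤ ∑ T : Finset M, ∑ m : M, spoofTerm e pE pS sp T m g σ τ := by
    intro g σ τ
    rw [hsumTm g σ τ]
    split_ifs with hv
    · refine mul_le_mul_of_nonneg_right ?_ (hw0 g σ τ)
      have h1 : c * Fintype.card S - i
          ≤ (Finset.univ.biUnion (e g) \ Finset.image τ Finset.univ).card := by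
        calc c * Fintype.card S - i
            = (Finset.univ.biUnion (e g)).card - (Finset.image τ Finset.univ).card := by
              rw [hU g, himg g σ τ hv]
          _ ≤ _ := Finset.le_card_sdiff _ _
      calc ((c * Fintype.card S : ℝ) - i) = ((c * Fintype.card S - i : ℕ) : ℝ) := by
            rw [Nat.cast_sub hicS]; push_cast; ring
        _ ≤ _ := Nat.cast_le.mpr h1
    · simp
  have hlow : ((c * Fintype.card S : ℝ) - i) ≤ ∑ T : Finset M, ∑ m, spoofH e pE pS sp T m := by
    have hTot : (∑ T : Finset M, ∑ m, spoofH e pE pS sp T m)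
        = ∑ g, ∑ σ, ∑ τ : Fin i → M, ∑ T : Finset M, ∑ m : M,
            spoofTerm e pE pS sp T m g σ τ := by
      simp only [spoofH]
      exact sum_swap5 _
    rw [hTot]
    calc ((c * Fintype.card S : ℝ) - i)
        = ((c * Fintype.card S : ℝ) - i) * (∑ g, ∑ σ, ∑ τ : Fin i → M,
            if (∀ j, τ j ∈ e g (σ j)) then spoofWgt pE pS sp g σ τ else 0) := by
          rw [hWsum, mul_one]
      _ = ∑ g, ∑ σ, ∑ τ : Fin i → M, ((c * Fintype.card S : ℝ) - i) *
            (if (∀ j, τ j ∈ e g (σ j)) then spoofWgt pE pS sp g σ τ else 0) := by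
          simp only [Finset.mul_sum]
      _ ≤ ∑ g, ∑ σ, ∑ τ : Fin i → M, ∑ T : Finset M, ∑ m : M,
            spoofTerm e pE pS sp T m g σ τ :=
          Finset.sum_le_sum fun g _ => Finset.sum_le_sum fun σ _ =>
            Finset.sum_le_sum fun τ _ => hstep3 g σ τ
  -- final bound for the chosen opponent
  have hfinal : (c : ℝ) * ((Fintype.card S : ℝ) - i) / ((Fintype.card M : ℝ) - i)
      ≤ ∑ T : Finset M, spoofH e pE pS sp T (opp T) := by
    rw [div_le_iff₀ hMpos]
    have hc1 : (1:ℝ) ≤ c := by exact_mod_cast hc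
    have hi0 : (0:ℝ) ≤ i := Nat.cast_nonneg i
    have hstep : (c : ℝ) * ((Fintype.card S : ℝ) - i) ≤ (c * Fintype.card S : ℝ) - i := by
      have : (i:ℝ) ≤ (c:ℝ) * i := le_mul_of_one_le_left hi0 hc1
      nlinarith
    calc (c : ℝ) * ((Fintype.card S : ℝ) - i)
        ≤ (c * Fintype.card S : ℝ) - i := hstep
      _ ≤ ∑ T : Finset M, ∑ m, spoofH e pE pS sp T m := hlow
      _ ≤ ∑ T : Finset M, ((Fintype.card M : ℝ) - i) * spoofH e pE pS sp T (opp T) :=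
          Finset.sum_le_sum fun T _ => hperT T
      _ = (∑ T : Finset M, spoofH e pE pS sp T (opp T)) * ((Fintype.card M : ℝ) - i) := by
          rw [← Finset.mul_sum]; ring
  -- pass to the supremum
  have hbdd : BddAbove (Set.range fun o : Finset M → M =>
      ∑ g : E, ∑ σ : Fin i ↪ S, ∑ τ : Fin i → M,
        if (∀ j, τ j ∈ e g (σ j)) ∧
            o (Finset.image τ Finset.univ) ∉ Finset.image τ Finset.univ ∧
            (∃ s, o (Finset.image τ Finset.univ) ∈ e g s)
        then pE g * pS σ * ∏ j, sp g (σ j) (τ j) else 0) := by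
    refine ⟨∑ g, ∑ σ, ∑ τ : Fin i → M, spoofWgt pE pS sp g σ τ, ?_⟩
    rintro x ⟨o, rfl⟩
    refine Finset.sum_le_sum fun g _ => Finset.sum_le_sum fun σ _ =>
      Finset.sum_le_sum fun τ _ => ?_
    split_ifs
    · exact le_of_eq rfl
    · exact hw0 g σ τ
  refine le_trans ?_ (le_ciSup hbdd opp)
  rw [hFeq opp]
  exact hfinal
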